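/- Consider an ordered linear-probing hash table with $n$ slots containing $(1-1/x)n$ elements with i.i.d. uniform hashes and no tombstones. For any position $i$, let $T$ be the number of elements $u$ residing in positions $\ge i$ with hash $h(u) < i$. Then $\Pr[T \ge kx] \le 2^{-\Omega(k)}$ for all $k \ge 1$. -/

import Mathlib

open scoped Classical

/-- Linear probing placement: a key with hash `h` lands in the first free position
at or after `h`. -/
noncomputable def placePos (occ : Finset ℕ) (h : ℕ) : ℕ :=
  sInf {p | h ≤ p ∧ p ∉ occ}

/-- The set of occupied positions after linear-probing insertions of a list of
hashes. -/
noncomputable def occAfter : List ℕ → Finset ℕ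
  | [] => ∅
  | h :: rest => insert (placePos (occAfter rest) h) (occAfter rest)

/-- The number of elements residing in positions `≥ i` whose hash is `< i`.
Since every element resides at a position at least its hash, this equals the number
of occupied positions `≥ i` minus the number of elements with hash `≥ i`
(an order-independent quantity). -/
noncomputable def crossCount {m n : ℕ} (ω : Fin m → Fin n) (i : ℕ) : ℕ :=
  ((occAfter (List.ofFn fun u => (ω u : ℕ))).filter (fun p => i ≤ p)).card -
    (Finset.univ.filter (fun u : Fin m => i ≤ (ω u : ℕ))).card

open Finset

lemma placePos_spec (occ : Finset ℕ) (h : ℕ) :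
    h ≤ placePos occ h ∧ placePos occ h ∉ occ := by
  have hne : {p | h ≤ p ∧ p ∉ occ}.Nonempty := by
    refine ⟨h + (occ.sup id) + 1, by omega, fun hc => ?_⟩
    have := Finset.le_sup (f := id) hc
    simp only [id] at this
    omega
  exact Nat.sInf_mem hne

lemma placePos_le (occ : Finset ℕ) (h p : ℕ) (hp : h ≤ p) (hpo : p ∉ occ) :
    placePos occ h ≤ p :=
  Nat.sInf_le ⟨hp, hpo⟩

lemma occAfter_subset (h : ℕ) (rest : List ℕ) : occAfter rest ⊆ occAfter (h :: rest) := by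
  intro p hp; exact Finset.mem_insert_of_mem hp

lemma card_occAfter (L : List ℕ) : (occAfter L).card = L.length := by
  induction L with
  | nil => simp [occAfter]
  | cons h rest ih =>
    have hnm := (placePos_spec (occAfter rest) h).2
    simp [occAfter, Finset.card_insert_of_notMem hnm, ih]

lemma occAfter_filter_lt (L : List ℕ) (a : ℕ) (ha : a = 0 ∨ (a - 1) ∉ occAfter L) :
    ((occAfter L).filter (fun p => p < a)).card = L.countP (fun l => decide (l < a)) := by
  rcases ha with rfl | ha
  · simp
  rcases Nat.eq_zero_or_pos a with rfl | hapos
  · simp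
  induction L with
  | nil => simp [occAfter]
  | cons h rest ih =>
    have ha' : (a - 1) ∉ occAfter rest := fun hc => ha (occAfter_subset h rest hc)
    have hq := placePos_spec (occAfter rest) h
    set q := placePos (occAfter rest) h with hqdef
    by_cases hh : h < a
    · have hqle : q ≤ a - 1 := placePos_le _ _ _ (by omega) ha'
      have hqne : q ≠ a - 1 := by
        intro hEq
        exact ha (by rw [← hEq]; exact Finset.mem_insert_self q _)
      have hqlt : q < a := by omega
      have : (occAfter (h :: rest)).filter (fun p => p < a)
          = insert q ((occAfter rest).filter (fun p => p < a)) := by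
        simp only [occAfter, Finset.filter_insert, if_pos hqlt]
        exact if_pos hqlt
      rw [this, Finset.card_insert_of_notMem (by
        intro hc; exact hq.2 (Finset.mem_of_mem_filter q hc))]
      rw [ih ha', List.countP_cons]
      simp [hh]
    · have hqge : ¬ q < a := by omega
      have : (occAfter (h :: rest)).filter (fun p => p < a)
          = (occAfter rest).filter (fun p => p < a) := by
        simp only [occAfter, Finset.filter_insert, if_neg hqge]
        exact if_neg hqge
      rw [this, ih ha', List.countP_cons]
      simp [hh]

noncomputable def win (n b s : ℕ) : Finset (Fin n) :=
  univ.filter (fun v => b - s ≤ (v : ℕ) ∧ (v : ℕ) < b)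

lemma countP_ofFn {m n : ℕ} (f : Fin m → Fin n) (p : ℕ → Bool) :
    (List.ofFn fun u => ((f u : ℕ))).countP p
      = (univ.filter (fun u : Fin m => p ((f u : ℕ)))).card := by
  induction m with
  | zero => simp
  | succ m ih =>
    rw [List.ofFn_succ, List.countP_cons]
    rw [ih (fun i => f i.succ)]
    rw [Fin.card_filter_univ_succ (p := fun u => p ((f u : ℕ)))]
    by_cases h0 : p ((f 0 : ℕ)) = true
    · simp [h0, Function.comp, add_comm]
    · simp only [Bool.not_eq_true] at h0
      simp [h0, Function.comp]

lemma claim1 {m n : ℕ} (ω : Fin m → Fin n) (i t : ℕ) (ht : 1 ≤ t)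
    (hev : t + (univ.filter (fun u : Fin m => i ≤ (ω u : ℕ))).card ≤
      ((occAfter (List.ofFn fun u => ((ω u : ℕ)))).filter (fun p => i ≤ p)).card) :
    ∃ s, 1 ≤ s ∧ s ≤ min i n ∧
      s + t ≤ (univ.filter (fun u : Fin m => ω u ∈ win n (min i n) s)).card := by
  set L : List ℕ := List.ofFn fun u => ((ω u : ℕ)) with hL
  set occ : Finset ℕ := occAfter L with hocc
  -- choose the cutoff a
  obtain ⟨a, hai, hB, hC⟩ : ∃ a, a ≤ i ∧ (∀ p, a ≤ p → p < i → p ∈ occ) ∧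
      (a = 0 ∨ (a - 1) ∉ occ) := by
    set F := (Finset.range i).filter (fun p => p ∉ occ) with hFdef
    rcases F.eq_empty_or_nonempty with hF | hF
    · refine ⟨0, Nat.zero_le _, fun p _ hpi => ?_, Or.inl rfl⟩
      by_contra hpo
      have : p ∈ F := by
        simp [hFdef, Finset.mem_range.mpr hpi, hpo]
      simp [hF] at this
    · set M := F.max' hF with hM
      have hmax : M ∈ F := F.max'_mem hF
      rw [hFdef] at hmax
      simp only [Finset.mem_filter, Finset.mem_range] at hmax
      refine ⟨M + 1, by omega, fun p hp hpi => ?_, Or.inr (by simpa using hmax.2)⟩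
      by_contra hpo
      have hpF : p ∈ F := by simp [hFdef, Finset.mem_range.mpr hpi, hpo]
      have := F.le_max' p hpF
      omega
  -- counts
  have hcard : occ.card = m := by rw [hocc, card_occAfter, hL, List.length_ofFn]
  have hc1 : (occ.filter (fun p => p < a)).card
      = (univ.filter (fun u : Fin m => (ω u : ℕ) < a)).card := by
    rw [hocc, occAfter_filter_lt L a hC, hL, countP_ofFn]
    congr 1
    ext u
    simp
  -- middle interval fully occupied
  have hmid : occ.filter (fun p => ¬ p < a ∧ p < i) = Finset.Ico a i := by
    ext p
    simp only [Finset.mem_filter, Finset.mem_Ico]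
    constructor
    · rintro ⟨_, h1, h2⟩; omega
    · rintro ⟨h1, h2⟩; exact ⟨hB p h1 h2, by omega, h2⟩
  have hmidcard : (occ.filter (fun p => ¬ p < a ∧ p < i)).card = i - a := by
    rw [hmid, Nat.card_Ico]
  -- partitions
  have hpart1 : (occ.filter (fun p => p < a)).card + (occ.filter (fun p => ¬ p < a)).card
      = occ.card := Finset.card_filter_add_card_filter_not _
  have hpart2 : ((occ.filter (fun p => ¬ p < a)).filter (fun p => p < i)).card
      + ((occ.filter (fun p => ¬ p < a)).filter (fun p => ¬ p < i)).card
      = (occ.filter (fun p => ¬ p < a)).card := Finset.card_filter_add_card_filter_not _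
  rw [Finset.filter_filter, Finset.filter_filter] at hpart2
  have hco : occ.filter (fun p => ¬ p < a ∧ ¬ p < i) = occ.filter (fun p => i ≤ p) := by
    apply Finset.filter_congr
    intro p _
    constructor
    · rintro ⟨_, h⟩; simpa using by omega
    · intro h; simp at h ⊢; omega
  rw [hco] at hpart2
  -- element-side partition
  have hup1 : (univ.filter (fun u : Fin m => (ω u : ℕ) < a)).card
      + (univ.filter (fun u : Fin m => ¬ (ω u : ℕ) < a)).card = m := by
    rw [Finset.card_filter_add_card_filter_not, Finset.card_univ, Fintype.card_fin]
  have hup2 : ((univ.filter (fun u : Fin m => ¬ (ω u : ℕ) < a)).filter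
        (fun u => (ω u : ℕ) < i)).card
      + ((univ.filter (fun u : Fin m => ¬ (ω u : ℕ) < a)).filter
        (fun u => ¬ (ω u : ℕ) < i)).card
      = (univ.filter (fun u : Fin m => ¬ (ω u : ℕ) < a)).card :=
    Finset.card_filter_add_card_filter_not _
  rw [Finset.filter_filter, Finset.filter_filter] at hup2
  have huo : univ.filter (fun u : Fin m => ¬ (ω u : ℕ) < a ∧ ¬ (ω u : ℕ) < i)
      = univ.filter (fun u : Fin m => i ≤ (ω u : ℕ)) := by
    apply Finset.filter_congr
    intro u _
    constructor
    · rintro ⟨_, h⟩; simpa using by omega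
    · intro h; simp at h ⊢; omega
  rw [huo] at hup2
  -- conclude the key inequality
  set ℓmid := (univ.filter (fun u : Fin m => ¬ (ω u : ℕ) < a ∧ (ω u : ℕ) < i)).card with hℓmid
  have hkey : (i - a) + t ≤ ℓmid := by omega
  -- a < min i n
  set b := min i n with hb
  have hab : a < b := by
    by_contra hab
    push_neg at hab
    have : ℓmid = 0 := by
      rw [hℓmid, Finset.card_eq_zero]
      apply Finset.filter_false_of_mem
      intro u _
      have := (ω u).isLt
      omega
    omega
  refine ⟨b - a, by omega, by omega, ?_⟩
  have hsub : univ.filter (fun u : Fin m => ¬ (ω u : ℕ) < a ∧ (ω u : ℕ) < i)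
      ⊆ univ.filter (fun u : Fin m => ω u ∈ win n b (b - a)) := by
    intro u hu
    simp only [Finset.mem_filter, Finset.mem_univ, true_and] at hu ⊢
    have := (ω u).isLt
    simp only [win, Finset.mem_filter, Finset.mem_univ, true_and]
    omega
  have := Finset.card_le_card hsub
  omega

lemma win_zero (n b : ℕ) : win n b 0 = ∅ := by
  rw [win, Finset.eq_empty_iff_forall_notMem]
  intro v
  simp only [Finset.mem_filter, Finset.mem_univ, true_and]
  omega

lemma win_mono (n b : ℕ) {s s' : ℕ} (h : s ≤ s') : win n b s ⊆ win n b s' := by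
  intro v
  simp only [win, Finset.mem_filter, Finset.mem_univ, true_and]
  omega

lemma win_card (n b s : ℕ) (hb : b ≤ n) (hs : s ≤ b) : (win n b s).card = s := by
  have himg : (win n b s).image (fun v : Fin n => (v : ℕ)) = Finset.Ico (b - s) b := by
    ext p
    simp only [Finset.mem_image, win, Finset.mem_filter, Finset.mem_univ, true_and,
      Finset.mem_Ico]
    constructor
    · rintro ⟨v, ⟨h1, h2⟩, rfl⟩; exact ⟨h1, h2⟩
    · rintro ⟨h1, h2⟩; exact ⟨⟨p, by omega⟩, ⟨h1, h2⟩, rfl⟩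
  have := Finset.card_image_of_injective (win n b s) (Fin.val_injective)
  rw [himg, Nat.card_Ico] at this
  omega

lemma win_insert (n b s : ℕ) (hb : b ≤ n) (hs : s + 1 ≤ b) :
    win n b (s + 1) = insert (⟨b - (s+1), by omega⟩ : Fin n) (win n b s) := by
  ext v
  simp only [win, Finset.mem_filter, Finset.mem_univ, true_and, Finset.mem_insert,
    Fin.ext_iff]
  omega

lemma cnew_not_mem (n b s : ℕ) (hb : b ≤ n) (hs : s + 1 ≤ b) :
    (⟨b - (s+1), by omega⟩ : Fin n) ∉ win n b s := by
  simp only [win, Finset.mem_filter, Finset.mem_univ, true_and]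
  omega

/-- The martingale one-step identity, summed over a cylinder set `G`. -/
lemma step_sum {m n : ℕ} (W : Finset (Fin n)) (c : Fin n) (hc : c ∉ W)
    (g₁ g₂ : ℝ) (hg : ((n : ℝ) - W.card) * g₁ = 1 + ((n : ℝ) - W.card - 1) * g₂)
    (G : Finset (Fin m → Fin n))
    (hG : ∀ ω ω' : Fin m → Fin n,
      (∀ u, (if ω u ∈ W then some (ω u) else none)
          = (if ω' u ∈ W then some (ω' u) else none)) → (ω ∈ G ↔ ω' ∈ G)) :
    ∑ ω ∈ G, ∏ u, (if ω u ∈ insert c W then (1:ℝ) else g₂)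
      = ∑ ω ∈ G, ∏ u, (if ω u ∈ W then (1:ℝ) else g₁) := by
  classical
  set pat : (Fin m → Fin n) → (Fin m → Option (Fin n)) :=
    fun ω u => if ω u ∈ W then some (ω u) else none with hpat
  have hmaps : ∀ ω ∈ G, pat ω ∈ (univ : Finset (Fin m → Option (Fin n))) :=
    fun _ _ => Finset.mem_univ _
  rw [← Finset.sum_fiberwise_of_maps_to hmaps (fun ω => ∏ u, (if ω u ∈ insert c W then (1:ℝ) else g₂))]
  rw [← Finset.sum_fiberwise_of_maps_to hmaps (fun ω => ∏ u, (if ω u ∈ W then (1:ℝ) else g₁))]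
  apply Finset.sum_congr rfl
  intro p _
  rcases (G.filter (fun ω => pat ω = p)).eq_empty_or_nonempty with hFp | hFp
  · rw [hFp]; simp
  obtain ⟨ω₀, hω₀⟩ := hFp
  simp only [Finset.mem_filter] at hω₀
  -- the fiber is a product set
  set C : Fin m → Finset (Fin n) := fun u =>
    match p u with
    | some v => {v}
    | none => Wᶜ with hC
  have hreal : ∀ u v, p u = some v → v ∈ W := by
    intro u v hpu
    rw [← hω₀.2] at hpu
    simp only [hpat] at hpu
    by_cases hw : ω₀ u ∈ W
    · rw [if_pos hw] at hpu
      obtain rfl : ω₀ u = v := by injection hpu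
      exact hw
    · rw [if_neg hw] at hpu; exact absurd hpu (by simp)
  have hfib : G.filter (fun ω => pat ω = p) = Fintype.piFinset C := by
    ext ω
    have hiff : (pat ω = p) ↔ ∀ u, ω u ∈ C u := by
      constructor
      · intro hp u
        have hu : (if ω u ∈ W then some (ω u) else none) = p u := by
          rw [← hp]
        by_cases hw : ω u ∈ W
        · rw [if_pos hw] at hu
          simp only [hC, ← hu]
          exact Finset.mem_singleton_self _
        · rw [if_neg hw] at hu
          simp only [hC, ← hu]
          simpa using hw
      · intro h
        funext u
        have hu := h u
        cases hpu : p u with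
        | some v =>
          have hvW := hreal u v hpu
          simp only [hC, hpu] at hu
          obtain rfl : ω u = v := Finset.mem_singleton.mp hu
          simp only [hpat]
          rw [if_pos hvW]
        | none =>
          simp only [hC, hpu] at hu
          simp only [hpat]
          rw [if_neg (by simpa using hu)]
    simp only [Finset.mem_filter, Fintype.mem_piFinset]
    constructor
    · rintro ⟨_, hp⟩; exact hiff.mp hp
    · intro h
      have hp : pat ω = p := hiff.mpr h
      refine ⟨(hG ω ω₀ ?_).mpr hω₀.1, hp⟩
      intro u
      have hpp : pat ω u = pat ω₀ u := by rw [hp, hω₀.2]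
      simpa only [hpat] using hpp
  rw [hfib, ← Finset.prod_univ_sum C (fun u v => if v ∈ insert c W then (1:ℝ) else g₂),
    ← Finset.prod_univ_sum C (fun u v => if v ∈ W then (1:ℝ) else g₁)]
  apply Finset.prod_congr rfl
  intro u _
  cases hpu : p u with
  | some v =>
    have hvW := hreal u v hpu
    simp only [hC, hpu]
    rw [Finset.sum_singleton, Finset.sum_singleton, if_pos hvW,
      if_pos (Finset.mem_insert_of_mem hvW)]
  | none =>
    simp only [hC, hpu]
    have hsplit : Wᶜ = insert c ((insert c W)ᶜ) := by
      ext v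
      simp only [Finset.mem_compl, Finset.mem_insert]
      constructor
      · intro hv
        by_cases hvc : v = c
        · exact Or.inl hvc
        · exact Or.inr (by push_neg; exact ⟨hvc, hv⟩)
      · rintro (rfl | hv)
        · exact hc
        · push_neg at hv; exact hv.2
    have hcnot : c ∉ (insert c W)ᶜ := by simp
    have hWcard : W.card + 1 ≤ n := by
      have : (insert c W).card ≤ Fintype.card (Fin n) := Finset.card_le_univ _
      rwa [Finset.card_insert_of_notMem hc, Fintype.card_fin] at this
    rw [hsplit, Finset.sum_insert hcnot, Finset.sum_insert hcnot]
    rw [if_pos (Finset.mem_insert_self c W), if_neg hc]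
    have h1 : ∀ v ∈ (insert c W)ᶜ, (if v ∈ insert c W then (1:ℝ) else g₂) = g₂ := by
      intro v hv; rw [if_neg (Finset.mem_compl.mp hv)]
    have h2 : ∀ v ∈ (insert c W)ᶜ, (if v ∈ W then (1:ℝ) else g₁) = g₁ := by
      intro v hv
      rw [if_neg (fun hw => Finset.mem_compl.mp hv (Finset.mem_insert_of_mem hw))]
    rw [Finset.sum_congr rfl h1, Finset.sum_congr rfl h2, Finset.sum_const, Finset.sum_const]
    have hcc : ((insert c W)ᶜ).card = n - (W.card + 1) := by
      rw [Finset.card_compl, Finset.card_insert_of_notMem hc, Fintype.card_fin]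
    rw [hcc, nsmul_eq_mul, nsmul_eq_mul]
    have : ((n - (W.card + 1) : ℕ) : ℝ) = (n : ℝ) - W.card - 1 := by
      push_cast [Nat.cast_sub hWcard]
      ring
    rw [this]
    linarith [hg]

noncomputable def SS {n m : ℕ} (b : ℕ) (ω : Fin m → Fin n) (s : ℕ) : ℕ :=
  (univ.filter (fun u => ω u ∈ win n b s)).card

noncomputable def gg (n : ℕ) (θ : ℝ) (s : ℕ) : ℝ := 1 - θ * n / ((n : ℝ) - s)

noncomputable def MM {n m : ℕ} (b : ℕ) (θ : ℝ) (s : ℕ) (ω : Fin m → Fin n) : ℝ :=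
  ∏ u, (if ω u ∈ win n b s then (1:ℝ) else gg n θ s)

noncomputable def Ef (n m b t s : ℕ) : Finset (Fin m → Fin n) :=
  univ.filter (fun ω => s + t ≤ SS b ω s ∧ ∀ s' < s, SS b ω s' < s' + t)

noncomputable def Gf (n m b t h : ℕ) : Finset (Fin m → Fin n) :=
  univ.filter (fun ω => ∀ s' ≤ h, SS b ω s' < s' + t)

lemma SS_zero {n m : ℕ} (b : ℕ) (ω : Fin m → Fin n) : SS b ω 0 = 0 := by
  rw [SS, win_zero, Finset.card_eq_zero]
  apply Finset.filter_false_of_mem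
  intro u _
  simp

lemma SS_congr {n m : ℕ} (b H : ℕ) (ω ω' : Fin m → Fin n)
    (hpp : ∀ u, (if ω u ∈ win n b H then some (ω u) else none)
        = (if ω' u ∈ win n b H then some (ω' u) else none))
    {s : ℕ} (hs : s ≤ H) : SS b ω s = SS b ω' s := by
  rw [SS, SS]
  congr 1
  apply Finset.filter_congr
  intro u _
  have h := hpp u
  by_cases h1 : ω u ∈ win n b H
  · rw [if_pos h1] at h
    by_cases h2 : ω' u ∈ win n b H
    · rw [if_pos h2] at h
      have : ω u = ω' u := by injection h
      rw [this]
    · rw [if_neg h2] at h; exact absurd h (by simp)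
  · rw [if_neg h1] at h
    by_cases h2 : ω' u ∈ win n b H
    · rw [if_pos h2] at h; exact absurd h.symm (by simp)
    · rw [if_neg h2] at h
      have hω : ω u ∉ win n b s := fun hc => h1 (win_mono n b hs hc)
      have hω' : ω' u ∉ win n b s := fun hc => h2 (win_mono n b hs hc)
      simp [hω, hω']

lemma master (n m b t : ℕ) (θ : ℝ) (hb : b ≤ n) (ht : 1 ≤ t) :
    ∀ H, H ≤ b → H < n →
    (∑ s ∈ Icc 1 H, ∑ ω ∈ Ef n m b t s, MM b θ s ω)
      + ∑ ω ∈ Gf n m b t H, MM b θ H ω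
      = (n : ℝ)^m * (gg n θ 0)^m := by
  intro H
  induction H with
  | zero =>
    intro _ _
    rw [show Icc 1 0 = (∅ : Finset ℕ) from rfl]
    have hGf : Gf n m b t 0 = univ := by
      rw [Gf, Finset.filter_true_of_mem]
      intro ω _ s' hs'
      interval_cases s'
      rw [SS_zero]; omega
    rw [hGf]
    have hMM : ∀ ω : Fin m → Fin n, MM b θ 0 ω = (gg n θ 0)^m := by
      intro ω
      rw [MM, win_zero]
      rw [Finset.prod_congr rfl (fun u _ => by rw [if_neg (Finset.notMem_empty _)])]
      rw [Finset.prod_const, Finset.card_univ, Fintype.card_fin]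
    rw [Finset.sum_congr rfl (fun ω _ => hMM ω), Finset.sum_const, Finset.card_univ,
      Fintype.card_fun, Fintype.card_fin, Fintype.card_fin, nsmul_eq_mul]
    push_cast
    simp
  | succ H ih =>
    intro hHb hHn
    have ihe := ih (by omega) (by omega)
    set c : Fin n := (⟨b - (H+1), by omega⟩ : Fin n) with hcdef
    have hcm : c ∉ win n b H := cnew_not_mem n b H hb hHb
    have hnH : (H : ℝ) + 1 < n := by exact_mod_cast hHn
    have hg : ((n : ℝ) - (win n b H).card) * gg n θ H
        = 1 + ((n : ℝ) - (win n b H).card - 1) * gg n θ (H+1) := by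
      rw [win_card n b H hb (by omega), gg, gg]
      have h1 : ((n : ℝ) - H) ≠ 0 := by linarith
      have h2 : ((n : ℝ) - ((H:ℕ)+1 : ℕ)) ≠ 0 := by push_cast; linarith
      push_cast at h2 ⊢
      field_simp
      ring
    have hG : ∀ ω ω' : Fin m → Fin n,
        (∀ u, (if ω u ∈ win n b H then some (ω u) else none)
            = (if ω' u ∈ win n b H then some (ω' u) else none)) →
        (ω ∈ Gf n m b t H ↔ ω' ∈ Gf n m b t H) := by
      intro ω ω' hpp
      simp only [Gf, Finset.mem_filter, Finset.mem_univ, true_and]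
      constructor <;> intro h s' hs'
      · rw [← SS_congr b H ω ω' hpp hs']; exact h s' hs'
      · rw [SS_congr b H ω ω' hpp hs']; exact h s' hs'
    have key : ∑ ω ∈ Gf n m b t H, MM b θ (H+1) ω = ∑ ω ∈ Gf n m b t H, MM b θ H ω := by
      have hss := step_sum (win n b H) c hcm (gg n θ H) (gg n θ (H+1)) hg (Gf n m b t H) hG
      calc ∑ ω ∈ Gf n m b t H, MM b θ (H+1) ω
          = ∑ ω ∈ Gf n m b t H, ∏ u, (if ω u ∈ insert c (win n b H) then (1:ℝ)
              else gg n θ (H+1)) := by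
            apply Finset.sum_congr rfl
            intro ω _
            rw [MM, win_insert n b H hb hHb]
        _ = ∑ ω ∈ Gf n m b t H, ∏ u, (if ω u ∈ win n b H then (1:ℝ) else gg n θ H) := hss
        _ = ∑ ω ∈ Gf n m b t H, MM b θ H ω := by
            apply Finset.sum_congr rfl
            intro ω _
            rw [MM]
    have hEf : (Gf n m b t H).filter (fun ω => (H+1) + t ≤ SS b ω (H+1)) = Ef n m b t (H+1) := by
      ext ω
      simp only [Ef, Gf, Finset.mem_filter, Finset.mem_univ, true_and]
      constructor
      · rintro ⟨h1, h2⟩; exact ⟨h2, fun s' hs' => h1 s' (by omega)⟩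
      · rintro ⟨h1, h2⟩; exact ⟨fun s' hs' => h2 s' (by omega), h1⟩
    have hGf : (Gf n m b t H).filter (fun ω => ¬ ((H+1) + t ≤ SS b ω (H+1))) = Gf n m b t (H+1) := by
      ext ω
      simp only [Gf, Finset.mem_filter, Finset.mem_univ, true_and]
      constructor
      · rintro ⟨h1, h2⟩ s' hs'
        rcases Nat.lt_or_ge s' (H+1) with h | h
        · exact h1 s' (by omega)
        · have : s' = H + 1 := by omega
          subst this
          omega
      · intro h
        refine ⟨fun s' hs' => h s' (by omega), ?_⟩
        have := h (H+1) (le_refl _)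
        omega
    have hsplit : ∑ ω ∈ Gf n m b t H, MM b θ (H+1) ω
        = ∑ ω ∈ Ef n m b t (H+1), MM b θ (H+1) ω
          + ∑ ω ∈ Gf n m b t (H+1), MM b θ (H+1) ω := by
      rw [← hEf, ← hGf]
      exact (Finset.sum_filter_add_sum_filter_not _ _ _).symm
    rw [Finset.sum_Icc_succ_top (by omega : 1 ≤ H + 1)]
    linarith [ihe, key, hsplit]

lemma gg_zero (n : ℕ) (θ : ℝ) (hn : 0 < n) : gg n θ 0 = 1 - θ := by
  rw [gg]
  have h0 : ((n:ℝ) - ((0:ℕ):ℝ)) = (n:ℝ) := by push_cast; ring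
  rw [h0, mul_div_assoc, div_self (by exact_mod_cast hn.ne' : (n:ℝ) ≠ 0), mul_one]

lemma bern (n m t : ℕ) (θ : ℝ) (hθ0 : 0 < θ) (hn : 0 < n) (hm : (m:ℝ) = (1-2*θ)*n) :
    ∀ s, s + t ≤ m → (1-θ)^(m-t) ≤ (gg n θ s)^(m - t - s) := by
  intro s
  induction s with
  | zero =>
    intro _
    rw [gg_zero n θ hn, Nat.sub_zero]
  | succ s ih =>
    intro hs
    have ihe := ih (by omega)
    obtain ⟨r, hrdef⟩ : ∃ r : ℕ, r = m - t - (s+1) := ⟨_, rfl⟩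
    have hr1 : m - t - s = r + 1 := by omega
    have hrn : r + (t + s + 1) = m := by omega
    have hrcast : (r:ℝ) + ((t:ℝ) + s + 1) = m := by exact_mod_cast hrn
    have hθn : 0 < θ * n := by positivity
    have hmn : (m:ℝ) = (n:ℝ) - 2*(θ*n) := by rw [hm]; ring
    obtain ⟨y, hydef⟩ : ∃ y : ℝ, y = (n:ℝ) - s := ⟨_, rfl⟩
    obtain ⟨D, hDdef⟩ : ∃ D : ℝ, D = y - θ * n := ⟨_, rfl⟩
    have hDbig : (t:ℝ) + 1 + θ * n ≤ D := by
      simp only [hDdef, hydef]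
      linarith [hrcast, Nat.cast_nonneg (α := ℝ) r]
    have ht0 : (0:ℝ) ≤ t := Nat.cast_nonneg t
    have hD1 : 1 < D := by linarith
    have hy1 : 1 < y := by simp only [hDdef] at hD1; linarith
    have hyD : y - D = θ * n := by simp only [hDdef]; ring
    have hD0 : 0 < D := by linarith
    have hy0 : 0 < y := by linarith
    obtain ⟨A, hAdef⟩ : ∃ A : ℝ, A = D * (y - 1) := ⟨_, rfl⟩
    obtain ⟨B, hBdef⟩ : ∃ B : ℝ, B = y * (D - 1) := ⟨_, rfl⟩
    have hAB : B = A - θ * n := by rw [hAdef, hBdef]; linear_combination -hyD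
    have hA0 : 0 < A := by rw [hAdef]; exact mul_pos hD0 (by linarith)
    have hB0 : 0 < B := by rw [hBdef]; exact mul_pos hy0 (by linarith)
    have hy1' : θ * n ≤ y - 1 := by linarith
    have hθnA : θ * n ≤ A := by rw [hAdef]; nlinarith [hD1, hy1']
    obtain ⟨a, hadef⟩ : ∃ a : ℝ, a = -(θ * n / A) := ⟨_, rfl⟩
    have ha2 : -2 ≤ a := by
      have : θ * n / A ≤ 1 := (div_le_one hA0).mpr hθnA
      have h0 : 0 ≤ θ * n / A := by positivity
      simp only [hadef]
      linarith
    have hbern : 1 + (r:ℝ) * a ≤ (1 + a)^r := one_add_mul_le_pow ha2 r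
    have hA1a : A * (1 + a) = A - θ * n := by
      simp only [hadef]
      rw [mul_add, mul_one, mul_neg, mul_div_cancel₀ _ hA0.ne']
      ring
    have hBr : B^r = A^r * (1 + a)^r := by rw [← mul_pow, hA1a, ← hAB]
    have hrD : (r:ℝ) ≤ D - 1 := by
      simp only [hDdef, hydef]
      linarith [hrcast]
    have hyrA : y * r ≤ A := by
      have h1 : y * r ≤ y * (D - 1) := by
        apply mul_le_mul_of_nonneg_left hrD hy0.le
      rw [← hBdef] at h1
      linarith [hAB, hθn]
    have h5 : y * (r:ℝ) * (θ * n) / A ≤ θ * n := by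
      rw [div_le_iff₀ hA0]
      calc y * (r:ℝ) * (θ * n) = (θ * n) * (y * r) := by ring
        _ ≤ (θ * n) * A := mul_le_mul_of_nonneg_left hyrA hθn.le
        _ = θ * n * A := by ring
    have h6 : D ≤ y * (1 + (r:ℝ) * a) := by
      have hexp : y * (1 + (r:ℝ) * a) = y - y * (r:ℝ) * (θ * n) / A := by
        simp only [hadef]; ring
      rw [hexp]
      linarith [h5, hyD]
    have hApow : (0:ℝ) ≤ A^r := by positivity
    have hmain : D * A^r ≤ y * B^r := by
      calc D * A^r ≤ (y * (1 + (r:ℝ) * a)) * A^r := mul_le_mul_of_nonneg_right h6 hApow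
        _ = y * (A^r * (1 + (r:ℝ) * a)) := by ring
        _ ≤ y * (A^r * (1 + a)^r) :=
            mul_le_mul_of_nonneg_left (mul_le_mul_of_nonneg_left hbern hApow) hy0.le
        _ = y * B^r := by rw [hBr]
    have hgoal : (D/y)^(r+1) ≤ ((D-1)/(y-1))^r := by
      rw [div_pow, div_pow,
        div_le_div_iff₀ (pow_pos hy0 (r+1)) (pow_pos (by linarith : (0:ℝ) < y - 1) r)]
      have e1 : D^(r+1) * (y-1)^r = D * A^r := by rw [hAdef, mul_pow, pow_succ]; ring
      have e2 : (D-1)^r * y^(r+1) = y * B^r := by rw [hBdef, mul_pow, pow_succ]; ring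
      rw [e1, e2]; exact hmain
    have hgg1 : gg n θ s = D / y := by
      rw [gg, ← hydef, hDdef, sub_div, div_self hy0.ne']
    have hgg2 : gg n θ (s+1) = (D-1)/(y-1) := by
      have hc : ((n:ℝ) - ((s+1 : ℕ):ℝ)) = y - 1 := by push_cast; rw [hydef]; ring
      have hy1ne : (y - 1) ≠ 0 := by linarith
      rw [gg, hc, hDdef]
      have h2 : y - θ * (n:ℝ) - 1 = (y - 1) - θ * n := by ring
      rw [h2, sub_div, div_self hy1ne]
    rw [hgg1, hr1] at ihe
    rw [hgg2, ← hrdef]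
    exact le_trans ihe hgoal

lemma SS_le {n m : ℕ} (b : ℕ) (ω : Fin m → Fin n) (s : ℕ) : SS b ω s ≤ m := by
  rw [SS]
  calc (univ.filter (fun u => ω u ∈ win n b s)).card ≤ (univ : Finset (Fin m)).card :=
        Finset.card_filter_le _ _
    _ = m := by rw [Finset.card_univ, Fintype.card_fin]

lemma MM_eq {n m : ℕ} (b : ℕ) (θ : ℝ) (s : ℕ) (ω : Fin m → Fin n) :
    MM b θ s ω = (gg n θ s) ^ (m - SS b ω s) := by
  rw [MM, Finset.prod_ite (fun _ => (1:ℝ)) (fun _ => gg n θ s), Finset.prod_const,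
    Finset.prod_const, one_pow, one_mul]
  congr 1
  have := Finset.card_filter_add_card_filter_not
    (s := (univ : Finset (Fin m))) (p := fun u => ω u ∈ win n b s)
  rw [Finset.card_univ, Fintype.card_fin] at this
  rw [SS]
  omega

lemma gg_pos (n m t : ℕ) (θ : ℝ) (hθ0 : 0 < θ) (hθh : θ < 1/2) (hn : 0 < n)
    (hm : (m:ℝ) = (1-2*θ)*n) {s : ℕ} (hs : s ≤ m - t) : 0 < gg n θ s ∧ gg n θ s ≤ 1 := by
  have hn' : (0:ℝ) < n := by exact_mod_cast hn
  have hθn : 0 < θ * n := by positivity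
  have hns : θ * n < (n:ℝ) - s := by
    rcases Nat.eq_zero_or_pos s with rfl | hs1
    · simp only [Nat.cast_zero, sub_zero]
      nlinarith
    · have hstm : (s:ℝ) ≤ (m:ℝ) - t := by
        have h1 : s + t ≤ m := by omega
        have : (s:ℝ) + t ≤ m := by exact_mod_cast h1
        linarith
      have ht0 : (0:ℝ) ≤ t := Nat.cast_nonneg t
      nlinarith [hm]
  have hpos : (0:ℝ) < (n:ℝ) - s := by linarith
  constructor
  · rw [gg, sub_pos, div_lt_one hpos]; exact hns
  · rw [gg]
    have : 0 ≤ θ * n / ((n:ℝ) - s) := by positivity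
    linarith

lemma core_count (n m b t : ℕ) (θ : ℝ) (hn : 0 < n) (hθ0 : 0 < θ) (hθh : θ < 1/2)
    (hm : (m:ℝ) = (1 - 2*θ) * n) (ht : 1 ≤ t) (hb : b ≤ n) :
    ((univ.filter (fun ω : Fin m → Fin n =>
        ∃ s, 1 ≤ s ∧ s ≤ b ∧ s + t ≤ SS b ω s)).card : ℝ)
      ≤ (1-θ)^t * (n:ℝ)^m := by
  have hn' : (0:ℝ) < n := by exact_mod_cast hn
  have hθ1 : (0:ℝ) < 1 - θ := by linarith
  set E' := univ.filter (fun ω : Fin m → Fin n =>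
      ∃ s, 1 ≤ s ∧ s ≤ b ∧ s + t ≤ SS b ω s) with hE'
  by_cases htm : t ≤ m
  case neg =>
    have : E' = ∅ := by
      rw [hE', Finset.filter_false_of_mem]
      rintro ω _ ⟨s, _, _, hsS⟩
      have := SS_le b ω s
      omega
    rw [this]
    simp only [Finset.card_empty, Nat.cast_zero]
    positivity
  case pos =>
  have hmltn : m < n := by
    have h2 : (m:ℝ) < n := by nlinarith [hm]
    exact_mod_cast h2
  set H := min b (m - t) with hH
  -- E' is covered by the first-passage pieces
  have hsub : E' ⊆ (Icc 1 H).biUnion (fun s => Ef n m b t s) := by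
    intro ω hω
    rw [hE', Finset.mem_filter] at hω
    obtain ⟨-, s, hs1, hsb, hsS⟩ := hω
    have hP : ∃ s, s + t ≤ SS b ω s := ⟨s, hsS⟩
    set s₀ := Nat.find hP with hs₀
    have hs₀P : s₀ + t ≤ SS b ω s₀ := Nat.find_spec hP
    have hs₀min : ∀ s' < s₀, ¬ (s' + t ≤ SS b ω s') := fun s' h => Nat.find_min hP h
    have hs₀1 : 1 ≤ s₀ := by
      rcases Nat.eq_zero_or_pos s₀ with h0 | h; swap
      · exact h
      · rw [h0] at hs₀P
        rw [SS_zero] at hs₀P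
        omega
    have hs₀s : s₀ ≤ s := Nat.find_min' hP hsS
    have hs₀m : s₀ + t ≤ m := le_trans hs₀P (SS_le b ω s₀)
    rw [Finset.mem_biUnion]
    refine ⟨s₀, Finset.mem_Icc.mpr ⟨hs₀1, by omega⟩, ?_⟩
    rw [Ef, Finset.mem_filter]
    exact ⟨Finset.mem_univ _, hs₀P, fun s' hlt => by have := hs₀min s' hlt; omega⟩
  have hcard1 : E'.card ≤ ∑ s ∈ Icc 1 H, (Ef n m b t s).card :=
    le_trans (Finset.card_le_card hsub) (Finset.card_biUnion_le)
  -- per-piece lower bound on the martingale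
  have hEfb : ∀ s ∈ Icc 1 H, ((Ef n m b t s).card : ℝ) * (1-θ)^(m-t)
      ≤ ∑ ω ∈ Ef n m b t s, MM b θ s ω := by
    intro s hsIcc
    rw [Finset.mem_Icc] at hsIcc
    have hstm : s + t ≤ m := by omega
    have hgp := gg_pos n m t θ hθ0 hθh hn hm (s := s) (by omega)
    have hbound : ∀ ω ∈ Ef n m b t s, (1-θ)^(m-t) ≤ MM b θ s ω := by
      intro ω hω
      rw [Ef, Finset.mem_filter] at hω
      obtain ⟨-, hωS, -⟩ := hω
      rw [MM_eq]
      calc (1-θ)^(m-t) ≤ (gg n θ s)^(m - t - s) := bern n m t θ hθ0 hn hm s hstm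
        _ ≤ (gg n θ s)^(m - SS b ω s) :=
            pow_le_pow_of_le_one hgp.1.le hgp.2 (by omega)
    have := Finset.card_nsmul_le_sum (Ef n m b t s) (MM b θ s) ((1-θ)^(m-t)) hbound
    rwa [nsmul_eq_mul] at this
  -- master identity and nonnegativity of remainder
  have hmaster := master n m b t θ hb ht H (min_le_left _ _) (by omega)
  have hGnn : 0 ≤ ∑ ω ∈ Gf n m b t H, MM b θ H ω := by
    apply Finset.sum_nonneg
    intro ω _
    rw [MM_eq]
    apply pow_nonneg
    exact (gg_pos n m t θ hθ0 hθh hn hm (s := H) (by omega)).1.le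
  have hchain : (E'.card : ℝ) * (1-θ)^(m-t) ≤ (n:ℝ)^m * (1-θ)^m := by
    calc (E'.card : ℝ) * (1-θ)^(m-t)
        ≤ (∑ s ∈ Icc 1 H, ((Ef n m b t s).card : ℝ)) * (1-θ)^(m-t) := by
          apply mul_le_mul_of_nonneg_right _ (by positivity)
          exact_mod_cast hcard1
      _ = ∑ s ∈ Icc 1 H, ((Ef n m b t s).card : ℝ) * (1-θ)^(m-t) := by
          rw [Finset.sum_mul]
      _ ≤ ∑ s ∈ Icc 1 H, ∑ ω ∈ Ef n m b t s, MM b θ s ω :=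
          Finset.sum_le_sum hEfb
      _ ≤ (n:ℝ)^m * (gg n θ 0)^m := by linarith [hmaster, hGnn]
      _ = (n:ℝ)^m * (1-θ)^m := by rw [gg_zero n θ hn]
  have hmsplit : (1-θ)^m = (1-θ)^t * (1-θ)^(m-t) := by
    rw [← pow_add]
    congr 1
    omega
  rw [hmsplit] at hchain
  have := le_of_mul_le_mul_right (by linarith [hchain] :
      (E'.card : ℝ) * (1-θ)^(m-t) ≤ ((1-θ)^t * (n:ℝ)^m) * (1-θ)^(m-t))
    (pow_pos hθ1 (m-t))
  exact this

/-- In an ordered linear-probing table with `n` slots containing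
`m = (1-1/x)n` elements with i.i.d. uniform hashes and no tombstones, for any
position `i`, the number `T` of elements residing in positions `≥ i` with hash `< i`
satisfies `Pr[T ≥ kx] ≤ 2^{-Ω(k)}` for all `k ≥ 1`. -/
theorem stmt17 :
    ∃ c : ℝ, 0 < c ∧
      ∀ (n m : ℕ) (x k : ℝ) (i : ℕ), 0 < n → 1 < x → 1 ≤ k →
        ((m : ℝ) = (1 - 1 / x) * n) →
        ((Finset.univ.filter (fun ω : Fin m → Fin n =>
            k * x ≤ (crossCount ω i : ℝ))).card : ℝ)
          ≤ (2 : ℝ) ^ (-(c * k)) * (n : ℝ) ^ m := by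
  refine ⟨1/2, by norm_num, ?_⟩
  intro n m x k i hn hx hk hm
  have hx0 : (0:ℝ) < x := by linarith
  set θ : ℝ := 1/(2*x) with hθdef
  have hθ0 : 0 < θ := by rw [hθdef]; positivity
  have hθh : θ < 1/2 := by
    rw [hθdef, div_lt_div_iff₀ (by linarith) (by norm_num)]
    linarith
  have hmθ : (m:ℝ) = (1 - 2*θ) * n := by
    rw [hm, hθdef]
    congr 1
    field_simp
  set t : ℕ := ⌈k * x⌉₊ with htdef
  have hkx1 : (1:ℝ) < k * x := by nlinarith
  have ht1 : 1 ≤ t := by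
    rw [htdef]
    exact Nat.one_le_ceil_iff.mpr (by linarith)
  set b : ℕ := min i n with hbdef
  -- event is contained in the window event
  have hsub : (Finset.univ.filter (fun ω : Fin m → Fin n =>
        k * x ≤ (crossCount ω i : ℝ)))
      ⊆ (univ.filter (fun ω : Fin m → Fin n =>
        ∃ s, 1 ≤ s ∧ s ≤ b ∧ s + t ≤ SS b ω s)) := by
    intro ω hω
    rw [Finset.mem_filter] at hω ⊢
    refine ⟨Finset.mem_univ _, ?_⟩
    have hcc : t ≤ crossCount ω i := by
      rw [htdef]
      exact Nat.ceil_le.mpr hω.2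
    have hev : t + (univ.filter (fun u : Fin m => i ≤ (ω u : ℕ))).card ≤
        ((occAfter (List.ofFn fun u => ((ω u : ℕ)))).filter (fun p => i ≤ p)).card := by
      have := hcc
      rw [crossCount] at this
      omega
    obtain ⟨s, hs1, hsb, hsS⟩ := claim1 ω i t ht1 hev
    exact ⟨s, hs1, hsb, hsS⟩
  have hcount := core_count n m b t θ hn hθ0 hθh hmθ ht1 (min_le_right i n)
  have hcard : ((Finset.univ.filter (fun ω : Fin m → Fin n =>
        k * x ≤ (crossCount ω i : ℝ))).card : ℝ)
      ≤ (1-θ)^t * (n:ℝ)^m := by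
    refine le_trans ?_ hcount
    exact_mod_cast Nat.cast_le.mpr (Finset.card_le_card hsub)
  refine le_trans hcard ?_
  apply mul_le_mul_of_nonneg_right _ (by positivity : (0:ℝ) ≤ (n:ℝ)^m)
  -- (1-θ)^t ≤ 2^(-(k/2))
  have h1 : (1-θ)^t ≤ Real.exp (-θ)^t := by
    apply pow_le_pow_left₀ (by linarith) _ t
    linarith [Real.add_one_le_exp (-θ)]
  have h2 : Real.exp (-θ)^t = Real.exp ((t:ℝ) * (-θ)) := (Real.exp_nat_mul _ t).symm
  have htkx : k * x ≤ (t:ℝ) := by rw [htdef]; exact Nat.le_ceil _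
  have hθt : k/2 ≤ θ * t := by
    have : θ * (k*x) ≤ θ * t := mul_le_mul_of_nonneg_left htkx hθ0.le
    have he : θ * (k*x) = k/2 := by
      rw [hθdef]
      field_simp
    linarith
  have h3 : Real.exp ((t:ℝ) * (-θ)) ≤ Real.exp (-(k/2)) := by
    apply Real.exp_le_exp.mpr
    nlinarith [hθt]
  have h4 : Real.exp (-(k/2)) ≤ (2:ℝ) ^ (-(1/2 * k)) := by
    rw [Real.rpow_def_of_pos (by norm_num : (0:ℝ) < 2)]
    apply Real.exp_le_exp.mpr
    have hlog1 : Real.log 2 ≤ 1 := by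
      have := Real.log_le_sub_one_of_pos (by norm_num : (0:ℝ) < 2)
      linarith
    have hlog0 : 0 < Real.log 2 := Real.log_pos (by norm_num)
    nlinarith
  calc (1-θ)^t ≤ Real.exp (-θ)^t := h1
    _ = Real.exp ((t:ℝ) * (-θ)) := h2
    _ ≤ Real.exp (-(k/2)) := h3
    _ ≤ (2:ℝ) ^ (-(1/2 * k)) := h4
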